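/- Let A be an integer expressed as A = Σ_{j} c_j 2^{e_j} where the c_j are integers with Σ_j |c_j| ≤ 2^M, and suppose p is a natural number such that every exponent e_j satisfies either e_j > p or e_j < p - M - 2. If additionally A ≥ 0, then bits p-1 and p of A are equal (both 0 or both 1); in particular p is not an 'interesting' bit position of A. -/

import Mathlib

lemma nat_bits_aux (q k r : ℕ)
    (h : r < 2 ^ q ∨ (3 * 2 ^ q ≤ r ∧ r < 2 ^ (q + 2))) :
    (2 ^ (q + 2) * k + r) / 2 ^ (q + 1) % 2 = (2 ^ (q + 2) * k + r) / 2 ^ q % 2 := by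
  have hq : 0 < (2:ℕ) ^ q := Nat.pow_pos (by norm_num)
  have e1 : 2 ^ (q + 2) * k + r = 2 ^ (q + 1) * (2 * k) + r := by ring
  have e2 : 2 ^ (q + 2) * k + r = 2 ^ q * (4 * k) + r := by ring
  have d1 : (2 ^ (q + 2) * k + r) / 2 ^ (q + 1) = 2 * k + r / 2 ^ (q + 1) := by
    rw [e1, Nat.mul_add_div (by positivity)]
  have d2 : (2 ^ (q + 2) * k + r) / 2 ^ q = 4 * k + r / 2 ^ q := by
    rw [e2, Nat.mul_add_div hq]
  rw [d1, d2]
  rcases h with h | ⟨h3, h4⟩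
  · have r1 : r / 2 ^ (q + 1) = 0 := Nat.div_eq_of_lt (by
      have : (2:ℕ) ^ q ≤ 2 ^ (q + 1) := Nat.pow_le_pow_right (by norm_num) (by omega)
      omega)
    have r2 : r / 2 ^ q = 0 := Nat.div_eq_of_lt h
    omega
  · have hq2 : (2:ℕ) ^ (q + 2) = 4 * 2 ^ q := by ring
    have hq1 : (2:ℕ) ^ (q + 1) = 2 * 2 ^ q := by ring
    have r1 : r / 2 ^ (q + 1) = 1 := by
      apply Nat.div_eq_of_lt_le <;> omega
    have r2 : r / 2 ^ q = 3 := by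
      apply Nat.div_eq_of_lt_le <;> omega
    omega

theorem no_interesting_bit {ι : Type*} (s : Finset ι) (c : ι → ℤ) (e : ι → ℕ)
    (M p : ℕ) (hp : 1 ≤ p) (A : ℤ)
    (hA : A = ∑ j ∈ s, c j * 2 ^ (e j))
    (hc : ∑ j ∈ s, |c j| ≤ 2 ^ M)
    (he : ∀ j ∈ s, (p : ℤ) < e j ∨ (e j : ℤ) < (p : ℤ) - M - 2)
    (h0 : 0 ≤ A) :
    A.toNat / 2 ^ p % 2 = A.toNat / 2 ^ (p - 1) % 2 := by
  classical
  obtain ⟨q, rfl⟩ : ∃ q, p = q + 1 := ⟨p - 1, by omega⟩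
  simp only [Nat.add_sub_cancel]
  set s₂ := s.filter (fun j => ¬ q + 1 < e j) with hs₂def
  set L := ∑ j ∈ s₂, c j * 2 ^ (e j) with hLdef
  have hsum : A = (∑ j ∈ s.filter (fun j => q + 1 < e j), c j * 2 ^ (e j)) + L := by
    rw [hA, Finset.sum_filter_add_sum_filter_not]
  have hdvd : (2:ℤ) ^ (q + 2) ∣ ∑ j ∈ s.filter (fun j => q + 1 < e j), c j * 2 ^ (e j) := by
    apply Finset.dvd_sum
    intro j hj
    simp only [Finset.mem_filter] at hj
    exact Dvd.dvd.mul_left (pow_dvd_pow 2 (by omega)) _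
  obtain ⟨K, hK⟩ := hdvd
  have hAeq : A = 2 ^ (q + 2) * K + L := by rw [hsum, hK]
  have hbound : ∀ j ∈ s₂, e j + M + 2 ≤ q := by
    intro j hj
    rw [hs₂def, Finset.mem_filter] at hj
    have h1 := he j hj.1
    have h2 := hj.2
    simp only [not_lt] at h2
    rcases h1 with h1 | h1
    · exfalso; exact_mod_cast absurd (by exact_mod_cast h1) (not_lt.mpr (by exact_mod_cast h2))
    · have : (e j : ℤ) + M + 3 ≤ (q : ℤ) + 1 := by push_cast at h1 ⊢; linarith
      exact_mod_cast (by push_cast at this ⊢; omega : (e j : ℤ) + M + 2 ≤ (q : ℤ))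
  -- bound on |L|
  have h1 : |L| ≤ ∑ j ∈ s₂, |c j| * 2 ^ (e j) := by
    calc |L| ≤ ∑ j ∈ s₂, |c j * 2 ^ (e j)| := Finset.abs_sum_le_sum_abs _ _
    _ = ∑ j ∈ s₂, |c j| * 2 ^ (e j) := by
        refine Finset.sum_congr rfl fun j _ => ?_
        rw [abs_mul, abs_pow]
        norm_num
  have h2 : ∀ j ∈ s₂, 2 ^ (M + 2) * (|c j| * 2 ^ (e j)) ≤ |c j| * 2 ^ q := by
    intro j hj
    have hb := hbound j hj
    have hpow : (2:ℤ) ^ (M + 2) * 2 ^ (e j) ≤ 2 ^ q := by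
      rw [← pow_add]
      exact pow_le_pow_right₀ (by norm_num) (by omega)
    calc 2 ^ (M + 2) * (|c j| * 2 ^ (e j)) = |c j| * (2 ^ (M + 2) * 2 ^ (e j)) := by ring
    _ ≤ |c j| * 2 ^ q := mul_le_mul_of_nonneg_left hpow (abs_nonneg _)
  have h3 : (2:ℤ) ^ (M + 2) * |L| ≤ 2 ^ M * 2 ^ q := by
    calc (2:ℤ) ^ (M + 2) * |L| ≤ 2 ^ (M + 2) * ∑ j ∈ s₂, |c j| * 2 ^ (e j) :=
          mul_le_mul_of_nonneg_left h1 (by positivity)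
    _ = ∑ j ∈ s₂, 2 ^ (M + 2) * (|c j| * 2 ^ (e j)) := Finset.mul_sum _ _ _
    _ ≤ ∑ j ∈ s₂, |c j| * 2 ^ q := Finset.sum_le_sum h2
    _ = (∑ j ∈ s₂, |c j|) * 2 ^ q := (Finset.sum_mul _ _ _).symm
    _ ≤ 2 ^ M * 2 ^ q := by
        refine mul_le_mul_of_nonneg_right (le_trans ?_ hc) (by positivity)
        exact Finset.sum_le_sum_of_subset_of_nonneg (Finset.filter_subset _ _)
          (fun j _ _ => abs_nonneg _)
  have h4 : 4 * |L| ≤ 2 ^ q := by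
    have hM : (0:ℤ) < 2 ^ M := by positivity
    have : (2:ℤ) ^ M * (4 * |L|) ≤ 2 ^ M * 2 ^ q := by
      calc (2:ℤ) ^ M * (4 * |L|) = 2 ^ (M + 2) * |L| := by ring
      _ ≤ 2 ^ M * 2 ^ q := h3
    exact le_of_mul_le_mul_left this hM
  have hq : (0:ℤ) < 2 ^ q := by positivity
  have hLlt : |L| < 2 ^ q := by
    have := abs_nonneg L
    linarith
  have habsL1 := le_abs_self L
  have habsL2 := neg_abs_le L
  have h2q : (2:ℤ) ^ q ≤ 2 ^ (q + 2) := pow_le_pow_right₀ (by norm_num) (by omega)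
  rcases le_or_gt 0 L with hL0 | hL0
  · -- L ≥ 0, K ≥ 0
    have hK0 : 0 ≤ K := by
      by_contra hcon
      push_neg at hcon
      have : K ≤ -1 := by omega
      nlinarith
    have hnat : A.toNat = 2 ^ (q + 2) * K.toNat + L.toNat := by
      have : ((A.toNat : ℤ)) = ((2 ^ (q + 2) * K.toNat + L.toNat : ℕ) : ℤ) := by
        push_cast [Int.toNat_of_nonneg h0, Int.toNat_of_nonneg hK0, Int.toNat_of_nonneg hL0]
        linarith [hAeq]
      exact_mod_cast this
    rw [hnat]
    apply nat_bits_aux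
    left
    have : (L.toNat : ℤ) < ((2 ^ q : ℕ) : ℤ) := by
      push_cast [Int.toNat_of_nonneg hL0]
      linarith
    exact_mod_cast this
  · -- L < 0, K ≥ 1
    have hK1 : 1 ≤ K := by
      by_contra hcon
      push_neg at hcon
      have : K ≤ 0 := by omega
      nlinarith
    have hr0 : (0:ℤ) ≤ 2 ^ (q + 2) + L := by linarith
    have hnat : A.toNat = 2 ^ (q + 2) * (K - 1).toNat + (2 ^ (q + 2) + L).toNat := by
      have : ((A.toNat : ℤ)) = ((2 ^ (q + 2) * (K - 1).toNat + (2 ^ (q + 2) + L).toNat : ℕ) : ℤ) := by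
        push_cast [Int.toNat_of_nonneg h0, Int.toNat_of_nonneg (by omega : (0:ℤ) ≤ K - 1),
          Int.toNat_of_nonneg hr0]
        linarith [hAeq]
      exact_mod_cast this
    rw [hnat]
    apply nat_bits_aux
    right
    constructor
    · have : ((3 * 2 ^ q : ℕ) : ℤ) ≤ ((2 ^ (q + 2) + L).toNat : ℤ) := by
        push_cast [Int.toNat_of_nonneg hr0]
        have h42 : (2:ℤ) ^ (q + 2) = 4 * 2 ^ q := by ring
        linarith
      exact_mod_cast this
    · have : (((2 ^ (q + 2) + L).toNat : ℤ)) < ((2 ^ (q + 2) : ℕ) : ℤ) := by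
        push_cast [Int.toNat_of_nonneg hr0]
        linarith
      exact_mod_cast this
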